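/- arXiv:1402.1505 — 6 statements merged into one kernel-verified Lean document; each statement's English description precedes it below -/
import Mathlib

section
/- Let M(ℓ,n,k) denote the maximal cardinality of a family A ⊆ C([n],k) containing no ℓ pairwise disjoint sets. Then M(ℓ,n,k) ≥ max_{1 ≤ i ≤ k} ∑_{j ≥ i} C(ℓi−1, j)·C(n−ℓi+1, k−j). -/
open scoped Classical

/-- A family has an `ℓ`-matching if it contains `ℓ` pairwise disjoint members. -/
def HasMatching (ℓ : ℕ) (𝒜 : Finset (Finset ℕ)) : Prop :=
  ∃ S : Finset (Finset ℕ), S ⊆ 𝒜 ∧ S.card = ℓ ∧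
    (S : Set (Finset ℕ)).Pairwise fun A B => Disjoint A B

/-- `M ℓ n k` : the maximal cardinality of a family of `k`-subsets of `[n]` with no
`ℓ`-matching. -/
noncomputable def M (ℓ n k : ℕ) : ℕ :=
  ((((Finset.Icc 1 n).powersetCard k).powerset.filter fun 𝒜 => ¬ HasMatching ℓ 𝒜).sup
    Finset.card)

/-- `M(ℓ,n,k) ≥ max_{1 ≤ i ≤ k} ∑_{j ≥ i} C(ℓi−1,j)·C(n−ℓi+1,k−j)`. -/
theorem stmt_2 (n k ℓ : ℕ) (hℓ : 1 ≤ ℓ) (hk : 1 ≤ k) (hn : k * ℓ ≤ n) :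
    (Finset.Icc 1 k).sup
        (fun i => ∑ j ∈ Finset.Icc i (min k (ℓ * i - 1)),
          (ℓ * i - 1).choose j * (n - (ℓ * i - 1)).choose (k - j)) ≤ M ℓ n k := by
  apply Finset.sup_le
  intro i hi
  obtain ⟨hi1, hik⟩ := Finset.mem_Icc.mp hi
  set m := ℓ * i - 1 with hm
  set T : Finset ℕ := Finset.Icc 1 m with hT
  have hli : 1 ≤ ℓ * i := Nat.one_le_iff_ne_zero.mpr (by positivity)
  have hmn : m ≤ n := by
    have h1 : ℓ * i ≤ k * ℓ := by
      calc ℓ * i ≤ ℓ * k := Nat.mul_le_mul_left _ hik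
      _ = k * ℓ := Nat.mul_comm _ _
    omega
  have hTsub : T ⊆ Finset.Icc 1 n := Finset.Icc_subset_Icc_right hmn
  have hTcard : T.card = m := by simp [hT, Nat.card_Icc]
  set 𝒜 : Finset (Finset ℕ) := ((Finset.Icc 1 n).powersetCard k).filter
    (fun A => i ≤ (A ∩ T).card) with h𝒜
  -- the family has no ℓ-matching
  have hnm : ¬ HasMatching ℓ 𝒜 := by
    rintro ⟨S, hS𝒜, hScard, hpair⟩
    have hdisj : ∀ A ∈ S, ∀ B ∈ S, A ≠ B → Disjoint (A ∩ T) (B ∩ T) := by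
      intro A hA B hB hAB
      exact Finset.disjoint_of_subset_left Finset.inter_subset_left
        (Finset.disjoint_of_subset_right Finset.inter_subset_left (hpair hA hB hAB))
    have h1 : ℓ * i ≤ ∑ A ∈ S, (A ∩ T).card := by
      have hle : ∀ A ∈ S, i ≤ (A ∩ T).card := fun A hA =>
        (Finset.mem_filter.mp (hS𝒜 hA)).2
      calc ℓ * i = ∑ _A ∈ S, i := by rw [Finset.sum_const, hScard, smul_eq_mul]
      _ ≤ _ := Finset.sum_le_sum hle
    have h2 : ∑ A ∈ S, (A ∩ T).card ≤ m := by
      rw [← Finset.card_biUnion hdisj, ← hTcard]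
      exact Finset.card_le_card (Finset.biUnion_subset.mpr fun A _ => Finset.inter_subset_right)
    omega
  -- M is at least the cardinality of this family
  have hM : 𝒜.card ≤ M ℓ n k := by
    apply Finset.le_sup
    rw [Finset.mem_filter]
    exact ⟨Finset.mem_powerset.mpr (Finset.filter_subset _ _), hnm⟩
  refine le_trans ?_ hM
  set t := Finset.Icc i (min k m) with ht
  -- counting the fibers
  have hsum : ∑ j ∈ t, m.choose j * (n - m).choose (k - j) ≤
      ∑ j ∈ t, (𝒜.filter fun A => (A ∩ T).card = j).card := by
    apply Finset.sum_le_sum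
    intro j hj
    obtain ⟨hij, hjk⟩ := Finset.mem_Icc.mp hj
    have hjk' : j ≤ k := le_trans hjk (min_le_left _ _)
    set U := Finset.Icc 1 n \ T with hU
    have hUcard : U.card = n - m := by
      rw [hU, Finset.card_sdiff_of_subset hTsub, hTcard, Nat.card_Icc]
      omega
    have hcard : (T.powersetCard j ×ˢ U.powersetCard (k - j)).card
        = m.choose j * (n - m).choose (k - j) := by
      rw [Finset.card_product, Finset.card_powersetCard, Finset.card_powersetCard, hTcard, hUcard]
    rw [← hcard]
    have key : ∀ p ∈ T.powersetCard j ×ˢ U.powersetCard (k - j),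
        (p.1 ∪ p.2) ∩ T = p.1 ∧ (p.1 ∪ p.2) \ T = p.2 ∧ (p.1 ∪ p.2).card = k ∧
          p.1 ∪ p.2 ⊆ Finset.Icc 1 n := by
      rintro ⟨B, C⟩ hBC
      rw [Finset.mem_product, Finset.mem_powersetCard, Finset.mem_powersetCard] at hBC
      obtain ⟨⟨hBT, hBc⟩, hCU, hCc⟩ := hBC
      have hCT : Disjoint C T := Finset.disjoint_of_subset_left hCU Finset.sdiff_disjoint
      have hBC' : Disjoint B C := (Finset.disjoint_of_subset_right hBT hCT).symm
      refine ⟨?_, ?_, ?_, ?_⟩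
      · rw [Finset.union_inter_distrib_right, Finset.inter_eq_left.mpr hBT,
          Finset.disjoint_iff_inter_eq_empty.mp hCT, Finset.union_empty]
      · rw [Finset.union_sdiff_distrib, Finset.sdiff_eq_empty_iff_subset.mpr hBT,
          Finset.sdiff_eq_self_of_disjoint hCT, Finset.empty_union]
      · rw [Finset.card_union_of_disjoint hBC', hBc, hCc]; omega
      · exact Finset.union_subset (hBT.trans hTsub) (hCU.trans (Finset.sdiff_subset))
    apply Finset.card_le_card_of_injOn (fun p => p.1 ∪ p.2)
    · rintro ⟨B, C⟩ hBC
      obtain ⟨hint, hsd, hcardk, hsub⟩ := key _ hBC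
      have hBc : B.card = j := by
        rw [Finset.mem_coe, Finset.mem_product, Finset.mem_powersetCard] at hBC
        exact hBC.1.2
      rw [Finset.mem_coe, Finset.mem_filter, h𝒜, Finset.mem_filter, Finset.mem_powersetCard]
      refine ⟨⟨⟨hsub, hcardk⟩, ?_⟩, ?_⟩
      · rw [hint, hBc]; exact hij
      · rw [hint, hBc]
    · intro p hp q hq heq
      obtain ⟨hp1, hp2, -, -⟩ := key _ hp
      obtain ⟨hq1, hq2, -, -⟩ := key _ hq
      simp only at heq
      have e1 : p.1 = q.1 := by rw [← hp1, ← hq1, heq]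
      have e2 : p.2 = q.2 := by rw [← hp2, ← hq2, heq]
      exact Prod.ext e1 e2
  refine le_trans hsum ?_
  have hdisjf : ∀ j ∈ t, ∀ j' ∈ t, j ≠ j' →
      Disjoint (𝒜.filter fun A => (A ∩ T).card = j) (𝒜.filter fun A => (A ∩ T).card = j') := by
    intro j _ j' _ hjj'
    rw [Finset.disjoint_left]
    intro A hA hA'
    rw [Finset.mem_filter] at hA hA'
    exact hjj' (hA.2 ▸ hA'.2 ▸ rfl)
  rw [← Finset.card_biUnion hdisjf]
  exact Finset.card_le_card (Finset.biUnion_subset.mpr fun j _ => Finset.filter_subset _ _)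
end

section
/- For integers a, n, k, i with 1 ≤ i, i ≤ k ≤ n, and a ≥ 1 with a ≤ n, the inequality ∑_{j ≥ i−1} C(a−1, j)·C(n−a+1, k−j) ≥ ∑_{j ≥ i} C(a, j)·C(n−a, k−j) holds. -/
/-- `∑_{j ≥ i−1} C(a−1,j)·C(n−a+1,k−j) ≥ ∑_{j ≥ i} C(a,j)·C(n−a,k−j)`. -/
theorem stmt_5 (a n k i : ℕ) (hi : 1 ≤ i) (hik : i ≤ k) (hkn : k ≤ n)
    (ha : 1 ≤ a) (han : a ≤ n) :
    ∑ j ∈ Finset.Icc i k, a.choose j * (n - a).choose (k - j) ≤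
      ∑ j ∈ Finset.Icc (i - 1) k, (a - 1).choose j * (n - a + 1).choose (k - j) := by
  obtain ⟨b, rfl⟩ : ∃ b, a = b + 1 := ⟨a - 1, (Nat.succ_pred_eq_of_pos ha).symm⟩
  obtain ⟨t, rfl⟩ : ∃ t, i = t + 1 := ⟨i - 1, (Nat.succ_pred_eq_of_pos hi).symm⟩
  obtain ⟨k', rfl⟩ : ∃ k', k = k' + 1 := ⟨k - 1, (Nat.succ_pred_eq_of_pos (le_trans hi hik)).symm⟩
  set m := n - (b + 1) with hm
  simp only [Nat.add_sub_cancel]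
  have htk : t ≤ k' := by omega
  -- reindexing map
  have hmap : Finset.Icc (t + 1) (k' + 1) = (Finset.Icc t k').map
      ⟨(· + 1), add_left_injective 1⟩ := by
    rw [Finset.map_eq_image]
    ext x
    simp [Finset.mem_Icc]
  -- LHS decomposition via Pascal
  have hL : ∑ j ∈ Finset.Icc (t + 1) (k' + 1), (b + 1).choose j * m.choose (k' + 1 - j)
      = ∑ j ∈ Finset.Icc (t + 1) (k' + 1), b.choose j * m.choose (k' + 1 - j)
        + ∑ j ∈ Finset.Icc t k', b.choose j * m.choose (k' - j) := by
    have h2 : ∑ j ∈ Finset.Icc t k', b.choose j * m.choose (k' - j)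
        = ∑ j ∈ Finset.Icc (t + 1) (k' + 1), b.choose (j - 1) * m.choose (k' + 1 - j) := by
      rw [hmap, Finset.sum_map]
      apply Finset.sum_congr rfl
      intro j hj
      simp only [Function.Embedding.coeFn_mk, Nat.add_sub_cancel, Nat.succ_sub_succ,
        Nat.sub_zero]
    rw [h2, ← Finset.sum_add_distrib]
    apply Finset.sum_congr rfl
    intro j hj
    rw [Finset.mem_Icc] at hj
    obtain ⟨j', rfl⟩ : ∃ j', j = j' + 1 := ⟨j - 1, by omega⟩
    rw [Nat.choose_succ_succ, add_mul, Nat.add_sub_cancel]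
    ring
  -- RHS decomposition via Pascal
  have hR : ∑ j ∈ Finset.Icc t (k' + 1), b.choose j * (m + 1).choose (k' + 1 - j)
      = ∑ j ∈ Finset.Icc t k', b.choose j * m.choose (k' - j)
        + (∑ j ∈ Finset.Icc t k', b.choose j * m.choose (k' + 1 - j)
          + b.choose (k' + 1)) := by
    rw [Finset.sum_Icc_succ_top (by omega)]
    have : ∀ j ∈ Finset.Icc t k', b.choose j * (m + 1).choose (k' + 1 - j)
        = b.choose j * m.choose (k' - j) + b.choose j * m.choose (k' + 1 - j) := by
      intro j hj
      rw [Finset.mem_Icc] at hj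
      have : k' + 1 - j = (k' - j) + 1 := by omega
      rw [this, Nat.choose_succ_succ, mul_add]
    rw [Finset.sum_congr rfl this, Finset.sum_add_distrib]
    simp [add_assoc]
  rw [hL, hR, add_comm (∑ j ∈ Finset.Icc (t + 1) (k' + 1), b.choose j * m.choose (k' + 1 - j))]
  apply Nat.add_le_add_left
  -- remaining: ∑_{Icc (t+1) (k'+1)} ≤ ∑_{Icc t k'} + C(b, k'+1)
  rw [Finset.sum_Icc_succ_top (by omega : t + 1 ≤ k' + 1)]
  simp only [Nat.sub_self, Nat.choose_zero_right, mul_one]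
  exact Nat.add_le_add
    (Finset.sum_le_sum_of_subset (Finset.Icc_subset_Icc_left (by omega))) le_rfl
end

section
/- If a left-compressed family A ⊆ C([n],k) contains ℓ pairwise disjoint sets, then it contains ℓ pairwise disjoint sets all contained in [ℓk]. -/
/-- `𝒜` is left compressed (as a family of `k`-subsets of `[n]`) if whenever
`{a₁<…<a_k} ∈ 𝒜` and `b₁<…<b_k ⊆ [n]` with `b_j ≤ a_j` for all `j`,
then `{b₁,…,b_k} ∈ 𝒜`. -/
def LeftCompressed (n k : ℕ) (𝒜 : Finset (Finset ℕ)) : Prop :=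
  ∀ A ∈ 𝒜, ∀ B : Finset ℕ, B ⊆ Finset.Icc 1 n →
    ∀ (hA : A.card = k) (hB : B.card = k),
      (∀ j : Fin k, (B.orderIsoOfFin hB j : ℕ) ≤ (A.orderIsoOfFin hA j : ℕ)) → B ∈ 𝒜

open Finset

/-- If counts of small elements of `B` dominate those of `A`, then the order statistics of
`B` are pointwise below those of `A`. -/
lemma orderEmb_le_of_counts {k : ℕ} {A B : Finset ℕ} (hA : A.card = k) (hB : B.card = k)
    (h : ∀ t : ℕ, (A.filter (· ≤ t)).card ≤ (B.filter (· ≤ t)).card) (j : Fin k) :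
    B.orderEmbOfFin hB j ≤ A.orderEmbOfFin hA j := by
  set a := A.orderEmbOfFin hA j with ha
  have h1 : j.1 + 1 ≤ (A.filter (· ≤ a)).card := by
    have hsub : ((Finset.Iic j).image (A.orderEmbOfFin hA)) ⊆ A.filter (· ≤ a) := by
      intro x hx
      simp only [mem_image, Finset.mem_Iic] at hx
      obtain ⟨i, hi, rfl⟩ := hx
      exact mem_filter.2 ⟨orderEmbOfFin_mem _ _ _, (A.orderEmbOfFin hA).monotone hi⟩
    have hcard : ((Finset.Iic j).image (A.orderEmbOfFin hA)).card = j.1 + 1 := by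
      rw [Finset.card_image_of_injective _ (A.orderEmbOfFin hA).injective, Fin.card_Iic]
    calc j.1 + 1 = _ := hcard.symm
      _ ≤ _ := card_le_card hsub
  have h2 : j.1 + 1 ≤ (B.filter (· ≤ a)).card := le_trans h1 (h a)
  by_contra hlt
  push_neg at hlt
  have hsub : B.filter (· ≤ a) ⊆ (Finset.Iio j).image (B.orderEmbOfFin hB) := by
    intro x hx
    rw [mem_filter] at hx
    have hxr : x ∈ Set.range (B.orderEmbOfFin hB) := by
      rw [Finset.range_orderEmbOfFin]; exact_mod_cast hx.1
    obtain ⟨i, rfl⟩ := hxr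
    refine Finset.mem_image.2 ⟨i, Finset.mem_Iio.2 ?_, rfl⟩
    have : B.orderEmbOfFin hB i < B.orderEmbOfFin hB j := lt_of_le_of_lt hx.2 hlt
    exact (B.orderEmbOfFin hB).lt_iff_lt.1 this
  have h3 : (B.filter (· ≤ a)).card ≤ j.1 := by
    calc (B.filter (· ≤ a)).card ≤ ((Finset.Iio j).image (B.orderEmbOfFin hB)).card :=
          card_le_card hsub
      _ ≤ (Finset.Iio j).card := card_image_le
      _ = j.1 := Fin.card_Iio j
  omega

lemma counts_insert_erase {A : Finset ℕ} {M x : ℕ} (hM : M ∈ A) (hx : x ∉ A) (hxM : x ≤ M)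
    (t : ℕ) : (A.filter (· ≤ t)).card ≤ ((insert x (A.erase M)).filter (· ≤ t)).card := by
  rcases le_or_gt x t with hxt | hxt
  · have hxe : x ∉ A.erase M := fun h => hx (mem_of_mem_erase h)
    have e1 : (insert x (A.erase M)).filter (· ≤ t) = insert x ((A.erase M).filter (· ≤ t)) := by
      rw [Finset.filter_insert, if_pos hxt]
    have e2 : A.filter (· ≤ t) ⊆ insert M ((A.erase M).filter (· ≤ t)) := by
      intro a ha
      rw [mem_filter] at ha
      rcases eq_or_ne a M with rfl | h
      · exact mem_insert_self _ _
      · exact mem_insert_of_mem (mem_filter.2 ⟨mem_erase.2 ⟨h, ha.1⟩, ha.2⟩)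
    have hxe' : x ∉ (A.erase M).filter (· ≤ t) := fun h => hxe (mem_of_mem_filter _ h)
    calc (A.filter (· ≤ t)).card ≤ (insert M ((A.erase M).filter (· ≤ t))).card :=
          card_le_card e2
      _ ≤ ((A.erase M).filter (· ≤ t)).card + 1 := card_insert_le _ _
      _ = (insert x ((A.erase M).filter (· ≤ t))).card := (card_insert_of_notMem hxe').symm
      _ = _ := by rw [e1]
  · apply card_le_card
    intro a ha
    rw [mem_filter] at ha ⊢
    have haM : a ≠ M := by omega
    exact ⟨mem_insert_of_mem (mem_erase.2 ⟨haM, ha.1⟩), ha.2⟩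

lemma stmt_7_aux (n k ℓ : ℕ) (hn : ℓ * k ≤ n) (𝒜 : Finset (Finset ℕ))
    (h𝒜 : ∀ A ∈ 𝒜, A ⊆ Finset.Icc 1 n ∧ A.card = k)
    (hcomp : LeftCompressed n k 𝒜) :
    ∀ N : ℕ, ∀ S : Finset (Finset ℕ), (∑ A ∈ S, ∑ x ∈ A, x) ≤ N → S ⊆ 𝒜 → S.card = ℓ →
      ((S : Set (Finset ℕ)).Pairwise fun A B => Disjoint A B) →
      ∃ S' : Finset (Finset ℕ), S' ⊆ 𝒜 ∧ S'.card = ℓ ∧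
        ((S' : Set (Finset ℕ)).Pairwise fun A B => Disjoint A B) ∧
        ∀ A ∈ S', A ⊆ Finset.Icc 1 (ℓ * k) := by
  intro N
  induction N using Nat.strong_induction_on with
  | _ N ih =>
    intro S hsum hS𝒜 hScard hpair
    by_cases hall : ∀ A ∈ S, A ⊆ Finset.Icc 1 (ℓ * k)
    · exact ⟨S, hS𝒜, hScard, hpair, hall⟩
    · push_neg at hall
      obtain ⟨A₀, hA₀S, hnsub⟩ := hall
      obtain ⟨M, hM, hMout⟩ := Finset.not_subset.1 hnsub
      have hA₀𝒜 : A₀ ∈ 𝒜 := hS𝒜 hA₀S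
      obtain ⟨hA₀n, hA₀k⟩ := h𝒜 A₀ hA₀𝒜
      have hMn : M ∈ Finset.Icc 1 n := hA₀n hM
      rw [Finset.mem_Icc] at hMn
      have hMgt : ℓ * k < M := by
        rw [Finset.mem_Icc] at hMout; omega
      -- the union of the matching
      set U := S.biUnion (fun A => A) with hU
      have hpair' : ∀ B ∈ S, ∀ C ∈ S, B ≠ C → Disjoint B C := fun B hB C hC h =>
        hpair (Finset.mem_coe.2 hB) (Finset.mem_coe.2 hC) h
      have hUcard : U.card = ℓ * k := by
        rw [hU, Finset.card_biUnion hpair']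
        have : ∀ A ∈ S, (A : Finset ℕ).card = k := fun A hA => (h𝒜 A (hS𝒜 hA)).2
        rw [Finset.sum_congr rfl this, Finset.sum_const, hScard, smul_eq_mul]
      have hMU : M ∈ U := Finset.mem_biUnion.2 ⟨A₀, hA₀S, hM⟩
      -- find a fresh small element x
      have hex : ∃ x, x ∈ Finset.Icc 1 (ℓ * k) ∧ x ∉ U := by
        by_contra hc
        push_neg at hc
        have hsub : insert M (Finset.Icc 1 (ℓ * k)) ⊆ U := by
          intro y hy
          rcases Finset.mem_insert.1 hy with rfl | hy
          · exact hMU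
          · exact hc y hy
        have h1 : (insert M (Finset.Icc 1 (ℓ * k))).card = ℓ * k + 1 := by
          rw [Finset.card_insert_of_notMem hMout, Nat.card_Icc]; omega
        have := Finset.card_le_card hsub
        rw [h1, hUcard] at this
        omega
      obtain ⟨x, hxIcc, hxU⟩ := hex
      have hxIcc' := Finset.mem_Icc.1 hxIcc
      have hxnot : ∀ A ∈ S, x ∉ A := fun A hA hxA => hxU (Finset.mem_biUnion.2 ⟨A, hA, hxA⟩)
      have hxA₀ : x ∉ A₀ := hxnot A₀ hA₀S
      have hxM : x < M := by omega
      set A' := insert x (A₀.erase M) with hA'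
      have hxe : x ∉ A₀.erase M := fun h => hxA₀ (mem_of_mem_erase h)
      have hkpos : 0 < k := by
        have : 0 < A₀.card := Finset.card_pos.2 ⟨M, hM⟩
        omega
      have hA'k : A'.card = k := by
        rw [hA', Finset.card_insert_of_notMem hxe, Finset.card_erase_of_mem hM, hA₀k]
        omega
      have hA'n : A' ⊆ Finset.Icc 1 n := by
        rw [hA']
        apply Finset.insert_subset
        · rw [Finset.mem_Icc]; omega
        · exact (Finset.erase_subset _ _).trans hA₀n
      have hA'𝒜 : A' ∈ 𝒜 := by
        refine hcomp A₀ hA₀𝒜 A' hA'n hA₀k hA'k fun j => ?_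
        rw [Finset.coe_orderIsoOfFin_apply, Finset.coe_orderIsoOfFin_apply]
        exact orderEmb_le_of_counts hA₀k hA'k
          (fun t => counts_insert_erase hM hxA₀ hxM.le t) j
      have hA'notS : A' ∉ S := by
        intro h
        exact hxU (Finset.mem_biUnion.2 ⟨A', h, Finset.mem_insert_self _ _⟩)
      have hA'note : A' ∉ S.erase A₀ := fun h => hA'notS (mem_of_mem_erase h)
      set S' := insert A' (S.erase A₀) with hS'
      have hS'𝒜 : S' ⊆ 𝒜 := by
        rw [hS']
        apply Finset.insert_subset hA'𝒜
        exact (Finset.erase_subset _ _).trans hS𝒜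
      have hS'card : S'.card = ℓ := by
        rw [hS', Finset.card_insert_of_notMem hA'note, Finset.card_erase_of_mem hA₀S, hScard]
        have : 0 < ℓ := hScard ▸ Finset.card_pos.2 ⟨A₀, hA₀S⟩
        omega
      have hA'sub : A' ⊆ insert x A₀ := by
        rw [hA']
        exact Finset.insert_subset_insert _ (Finset.erase_subset _ _)
      have hdisjA' : ∀ C ∈ S.erase A₀, Disjoint A' C := by
        intro C hC
        have hCS : C ∈ S := mem_of_mem_erase hC
        have hCne : C ≠ A₀ := Finset.ne_of_mem_erase hC
        have hd : Disjoint A₀ C := hpair' A₀ hA₀S C hCS (Ne.symm hCne)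
        refine Finset.disjoint_left.2 fun a haA' haC => ?_
        rcases Finset.mem_insert.1 (hA'sub haA') with rfl | haA₀
        · exact hxnot C hCS haC
        · exact Finset.disjoint_left.1 hd haA₀ haC
      have hS'pair : (S' : Set (Finset ℕ)).Pairwise fun A B => Disjoint A B := by
        intro B hB C hC hBC
        rw [Finset.mem_coe, hS', Finset.mem_insert] at hB hC
        rcases hB with rfl | hB
        · rcases hC with rfl | hC
          · exact absurd rfl hBC
          · exact hdisjA' C hC
        · rcases hC with rfl | hC
          · exact (hdisjA' B hB).symm
          · exact hpair' B (mem_of_mem_erase hB) C (mem_of_mem_erase hC) hBC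
      -- the sum strictly decreases
      have hsumA' : ∑ y ∈ A', y = x + ∑ y ∈ A₀.erase M, y := by
        rw [hA', Finset.sum_insert hxe]
      have hsumA₀ : M + ∑ y ∈ A₀.erase M, y = ∑ y ∈ A₀, y :=
        Finset.add_sum_erase A₀ (fun y => y) hM
      have hsumS : (∑ z ∈ A₀, z) + ∑ B ∈ S.erase A₀, ∑ z ∈ B, z
          = ∑ B ∈ S, ∑ z ∈ B, z := Finset.add_sum_erase S (fun B => ∑ z ∈ B, z) hA₀S
      have hsumS' : ∑ B ∈ S', ∑ z ∈ B, z
          = (∑ y ∈ A', y) + ∑ B ∈ S.erase A₀, ∑ z ∈ B, z := by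
        rw [hS', Finset.sum_insert hA'note]
      have hlt : (∑ B ∈ S', ∑ z ∈ B, z) < ∑ B ∈ S, ∑ z ∈ B, z := by omega
      exact ih _ (lt_of_lt_of_le hlt hsum) S' le_rfl hS'𝒜 hS'card hS'pair

/-- If a left-compressed family of `k`-subsets of `[n]` contains `ℓ` pairwise disjoint
sets, then it contains `ℓ` pairwise disjoint sets all inside `[ℓk]`. -/
theorem stmt_7 (n k ℓ : ℕ) (hn : ℓ * k ≤ n) (𝒜 : Finset (Finset ℕ))
    (h𝒜 : ∀ A ∈ 𝒜, A ⊆ Finset.Icc 1 n ∧ A.card = k)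
    (hcomp : LeftCompressed n k 𝒜)
    (hmatch : ∃ S : Finset (Finset ℕ), S ⊆ 𝒜 ∧ S.card = ℓ ∧
      (S : Set (Finset ℕ)).Pairwise fun A B => Disjoint A B) :
    ∃ S : Finset (Finset ℕ), S ⊆ 𝒜 ∧ S.card = ℓ ∧
      ((S : Set (Finset ℕ)).Pairwise fun A B => Disjoint A B) ∧
      ∀ A ∈ S, A ⊆ Finset.Icc 1 (ℓ * k) := by
  obtain ⟨S, hS𝒜, hScard, hpair⟩ := hmatch
  exact stmt_7_aux n k ℓ hn 𝒜 h𝒜 hcomp (∑ A ∈ S, ∑ x ∈ A, x) S le_rfl hS𝒜 hScard hpair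
end

section
/- For integers ℓ ≥ 2, k ≥ 1, 1 ≤ i ≤ k, and n ≥ kℓ with ℓ(i−1) ≤ a < ℓi−1: the sum ∑_{j > a/ℓ} C(a, j)·C(n−a, k−j) is non-increasing as a decreases within the interval [ℓ(i−1), ℓi−1], i.e., ∑_{j > a/ℓ} C(a,j)C(n−a,k−j) ≤ ∑_{j > (a+1)/ℓ} C(a+1,j)C(n−a−1,k−j) whenever ℓ(i−1) ≤ a < a+1 ≤ ℓi−1. -/
open Finset in
lemma sum_choose_mono_aux (a b i k : ℕ) (hi : 1 ≤ i) (hik : i ≤ k) :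
    ∑ j ∈ Finset.Icc i k, a.choose j * (b + 1).choose (k - j) ≤
      ∑ j ∈ Finset.Icc i k, (a + 1).choose j * b.choose (k - j) := by
  have hA : ∑ j ∈ Icc i k, (a + 1).choose j * b.choose (k - j)
      = ∑ j ∈ Icc i k, a.choose j * b.choose (k - j)
        + ∑ j ∈ Icc i k, a.choose (j - 1) * b.choose (k - j) := by
    rw [← Finset.sum_add_distrib]
    refine Finset.sum_congr rfl fun j hj => ?_
    simp only [Finset.mem_Icc] at hj
    obtain ⟨m, rfl⟩ : ∃ m, j = m + 1 := ⟨j - 1, by omega⟩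
    rw [Nat.choose_succ_succ]
    simp [Nat.add_mul]
    ring
  have hC : ∑ j ∈ Icc i k, a.choose (j - 1) * b.choose (k - j)
      = ∑ j ∈ Icc (i - 1) (k - 1), a.choose j * b.choose (k - 1 - j) := by
    rw [show Icc i k = (Icc (i - 1) (k - 1)).map (addRightEmbedding 1) by
      rw [Finset.map_add_right_Icc]; congr 1 <;> omega]
    rw [Finset.sum_map]
    refine Finset.sum_congr rfl fun x hx => ?_
    simp only [addRightEmbedding_apply, Nat.add_sub_cancel]
    have : k - (x + 1) = k - 1 - x := by omega
    rw [this]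
  have hsplit : Icc (i - 1) (k - 1) = insert (i - 1) (Icc i (k - 1)) := by
    ext x; simp [Finset.mem_Icc]; omega
  have hnotmem : (i - 1) ∉ Icc i (k - 1) := by simp [Finset.mem_Icc]; omega
  have hB : ∑ j ∈ Icc i k, a.choose j * (b + 1).choose (k - j)
      = ∑ j ∈ Icc i k, a.choose j * b.choose (k - j)
        + ∑ j ∈ Icc i (k - 1), a.choose j * b.choose (k - 1 - j) := by
    have hks : Icc i k = insert k (Icc i (k - 1)) := by
      ext x; simp [Finset.mem_Icc]; omega
    have hkn : k ∉ Icc i (k - 1) := by simp [Finset.mem_Icc]; omega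
    have hpt : ∀ j ∈ Icc i (k - 1),
        a.choose j * (b + 1).choose (k - j)
          = a.choose j * b.choose (k - j) + a.choose j * b.choose (k - 1 - j) := by
      intro j hj
      simp only [Finset.mem_Icc] at hj
      have h1 : k - j = (k - 1 - j) + 1 := by omega
      rw [h1, Nat.choose_succ_succ]
      ring
    rw [hks, Finset.sum_insert hkn, Finset.sum_insert hkn, Nat.sub_self,
      Finset.sum_congr rfl hpt, Finset.sum_add_distrib]
    simp [Nat.choose_zero_right]
    ring
  rw [hA, hC, hB, hsplit, Finset.sum_insert hnotmem]
  omega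

/-- Monotonicity of `∑_{j > a/ℓ} C(a,j)C(n−a,k−j)` in `a` within `[ℓ(i−1), ℓi−1]`. -/
theorem stmt_9 (n k ℓ i a : ℕ) (hℓ : 2 ≤ ℓ) (hk : 1 ≤ k) (hi : 1 ≤ i) (hik : i ≤ k)
    (hn : k * ℓ ≤ n) (ha : ℓ * (i - 1) ≤ a) (ha' : a + 1 ≤ ℓ * i - 1) :
    ∑ j ∈ Finset.Icc (a / ℓ + 1) k, a.choose j * (n - a).choose (k - j) ≤
      ∑ j ∈ Finset.Icc ((a + 1) / ℓ + 1) k,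
        (a + 1).choose j * (n - a - 1).choose (k - j) := by
  have hlk : ℓ * i ≤ ℓ * k := Nat.mul_le_mul_left _ hik
  have hkl : k * ℓ = ℓ * k := Nat.mul_comm _ _
  have hii : i - 1 + 1 = i := by omega
  have h1 : ℓ * i = ℓ * (i - 1) + ℓ := by
    conv_lhs => rw [← hii]
    rw [Nat.mul_succ]
  have h2 : (i - 1) * ℓ = ℓ * (i - 1) := Nat.mul_comm _ _
  have h3 : (i - 1 + 1) * ℓ = ℓ * i := by rw [hii, Nat.mul_comm]
  have hdiv1 : a / ℓ = i - 1 := Nat.div_eq_of_lt_le (by omega) (by omega)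
  have hdiv2 : (a + 1) / ℓ = i - 1 := Nat.div_eq_of_lt_le (by omega) (by omega)
  have han : a + 1 ≤ n := by omega
  set b := n - a - 1 with hb
  have hba : n - a = b + 1 := by omega
  rw [hdiv1, hdiv2, hii, hba]
  exact sum_choose_mono_aux a b i k hi hik
end

section
/- For ℓ ≥ 2, k ≥ 1, n ≥ kℓ: max_{1 ≤ a ≤ kℓ−1} ∑_{j > a/ℓ} C(a,j)·C(n−a,k−j) = max_{1 ≤ i ≤ k} ∑_{j ≥ i} C(ℓi−1,j)·C(n−ℓi+1,k−j). -/
open Finset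

/-- One-step monotonicity of the tail of Vandermonde's sum. -/
lemma tail_step (n a i k : ℕ) (hi : 1 ≤ i) (ha : a < n) :
    ∑ j ∈ Finset.Icc i k, a.choose j * (n - a).choose (k - j)
      ≤ ∑ j ∈ Finset.Icc i k, (a + 1).choose j * (n - (a + 1)).choose (k - j) := by
  rcases lt_or_ge k i with h | h
  · rw [Finset.Icc_eq_empty_of_lt h]; simp
  obtain ⟨k', rfl⟩ : ∃ k', k = k' + 1 := ⟨k - 1, by omega⟩
  set m := n - (a + 1) with hm
  have hna : n - a = m + 1 := by omega
  rw [hna]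
  -- Rewrite LHS
  have hLHS : ∑ j ∈ Finset.Icc i (k' + 1), a.choose j * (m + 1).choose (k' + 1 - j)
      = (∑ j ∈ Finset.Icc i (k' + 1), a.choose j * m.choose (k' + 1 - j))
        + ∑ j ∈ Finset.Icc i k', a.choose j * m.choose (k' + 1 - j - 1) := by
    rw [Finset.sum_Icc_succ_top h, Finset.sum_Icc_succ_top h]
    have : ∀ j ∈ Finset.Icc i k',
        a.choose j * (m + 1).choose (k' + 1 - j)
          = a.choose j * m.choose (k' + 1 - j) + a.choose j * m.choose (k' + 1 - j - 1) := by
      intro j hj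
      have hjk : j ≤ k' := (Finset.mem_Icc.mp hj).2
      have h1 : k' + 1 - j = (k' - j) + 1 := by omega
      have h2 : k' + 1 - j - 1 = k' - j := by omega
      rw [h2, h1, Nat.choose_succ_succ', Nat.mul_add, Nat.add_comm]
    rw [Finset.sum_congr rfl this, Finset.sum_add_distrib]
    simp [Nat.sub_self]
    ring
  -- Rewrite RHS
  have hRHS : ∑ j ∈ Finset.Icc i (k' + 1), (a + 1).choose j * m.choose (k' + 1 - j)
      = (∑ j ∈ Finset.Icc i (k' + 1), a.choose j * m.choose (k' + 1 - j))
        + ∑ t ∈ Finset.Icc (i - 1) k', a.choose t * m.choose (k' + 1 - t - 1) := by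
    have hmap : Finset.Icc i (k' + 1)
        = (Finset.Icc (i - 1) k').map (addRightEmbedding 1) := by
      rw [Finset.map_add_right_Icc]
      congr 1
      omega
    rw [hmap, Finset.sum_map, Finset.sum_map]
    have : ∀ t ∈ Finset.Icc (i - 1) k',
        (a + 1).choose (addRightEmbedding 1 t) * m.choose (k' + 1 - addRightEmbedding 1 t)
          = a.choose (addRightEmbedding 1 t) * m.choose (k' + 1 - addRightEmbedding 1 t)
            + a.choose t * m.choose (k' + 1 - t - 1) := by
      intro t _
      simp only [addRightEmbedding_apply]
      rw [Nat.choose_succ_succ, Nat.add_mul]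
      have : k' + 1 - (t + 1) = k' + 1 - t - 1 := by omega
      rw [this]
      ring
    rw [Finset.sum_congr rfl this, Finset.sum_add_distrib]
  rw [hLHS, hRHS]
  apply Nat.add_le_add_left
  apply Finset.sum_le_sum_of_subset
  exact Finset.Icc_subset_Icc (Nat.sub_le i 1) le_rfl

/-- Monotonicity of the tail of Vandermonde's sum. -/
lemma tail_mono (n i k : ℕ) (hi : 1 ≤ i) {a b : ℕ} (hab : a ≤ b) (hb : b ≤ n) :
    ∑ j ∈ Finset.Icc i k, a.choose j * (n - a).choose (k - j)
      ≤ ∑ j ∈ Finset.Icc i k, b.choose j * (n - b).choose (k - j) := by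
  induction b, hab using Nat.le_induction with
  | base => exact le_rfl
  | succ b hab ih =>
      exact (ih (by omega)).trans (tail_step n b i k hi (by omega))

/-- `max_{1 ≤ a ≤ kℓ−1} ∑_{j > a/ℓ} C(a,j)C(n−a,k−j)
  = max_{1 ≤ i ≤ k} ∑_{j ≥ i} C(ℓi−1,j)C(n−ℓi+1,k−j)`. -/
theorem stmt_10 (n k ℓ : ℕ) (hℓ : 2 ≤ ℓ) (hk : 1 ≤ k) (hn : k * ℓ ≤ n) :
    (Finset.Icc 1 (k * ℓ - 1)).sup
        (fun a => ∑ j ∈ Finset.Icc (a / ℓ + 1) k, a.choose j * (n - a).choose (k - j)) =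
      (Finset.Icc 1 k).sup
        (fun i => ∑ j ∈ Finset.Icc i k,
          (ℓ * i - 1).choose j * (n - (ℓ * i - 1)).choose (k - j)) := by
  have hℓ0 : 0 < ℓ := by omega
  have hkl1 : 1 ≤ k * ℓ := Nat.one_le_iff_ne_zero.mpr (by positivity)
  have hlk : ℓ * k = k * ℓ := Nat.mul_comm ℓ k
  apply le_antisymm
  · apply Finset.sup_le
    intro a ha
    rw [Finset.mem_Icc] at ha
    set i := a / ℓ + 1 with hidef
    have hik : i ≤ k := by
      have h4 : a < k * ℓ := by omega
      have h5 : a / ℓ < k := (Nat.div_lt_iff_lt_mul hℓ0).mpr h4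
      omega
    have hi1 : 1 ≤ i := Nat.succ_le_succ (Nat.zero_le _)
    have haℓ : a ≤ ℓ * i - 1 := by
      have h1 : ℓ * (a / ℓ) + a % ℓ = a := Nat.div_add_mod a ℓ
      have h2 : a % ℓ < ℓ := Nat.mod_lt _ hℓ0
      have : ℓ * i = ℓ * (a / ℓ) + ℓ := by rw [hidef]; ring
      omega
    have hbn : ℓ * i - 1 ≤ n := by
      have h3 : ℓ * i ≤ ℓ * k := Nat.mul_le_mul_left ℓ hik
      omega
    have hmem : i ∈ Finset.Icc 1 k := Finset.mem_Icc.mpr ⟨hi1, hik⟩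
    calc ∑ j ∈ Finset.Icc i k, a.choose j * (n - a).choose (k - j)
        ≤ ∑ j ∈ Finset.Icc i k,
            (ℓ * i - 1).choose j * (n - (ℓ * i - 1)).choose (k - j) :=
          tail_mono n i k hi1 haℓ hbn
      _ ≤ _ := Finset.le_sup (f := fun x => ∑ j ∈ Finset.Icc x k,
          (ℓ * x - 1).choose j * (n - (ℓ * x - 1)).choose (k - j)) hmem
  · apply Finset.sup_le
    intro i hi
    rw [Finset.mem_Icc] at hi
    set a := ℓ * i - 1 with hadef
    have ha1 : 1 ≤ a := by
      have : ℓ ≤ ℓ * i := Nat.le_mul_of_pos_right ℓ (by omega)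
      omega
    have ha2 : a ≤ k * ℓ - 1 := by
      have h3 : ℓ * i ≤ ℓ * k := Nat.mul_le_mul_left ℓ hi.2
      omega
    have hdiv : a / ℓ + 1 = i := by
      have hsplit : ℓ * i = ℓ * (i - 1) + ℓ := by
        have h7 : i - 1 + 1 = i := by omega
        calc ℓ * i = ℓ * (i - 1 + 1) := by rw [h7]
          _ = ℓ * (i - 1) + ℓ := by ring
      have h1 : a = ℓ * (i - 1) + (ℓ - 1) := by omega
      rw [h1]
      rw [Nat.mul_add_div hℓ0]
      have : (ℓ - 1) / ℓ = 0 := Nat.div_eq_of_lt (by omega)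
      omega
    have hmem : a ∈ Finset.Icc 1 (k * ℓ - 1) := Finset.mem_Icc.mpr ⟨ha1, ha2⟩
    calc ∑ j ∈ Finset.Icc i k, (ℓ * i - 1).choose j * (n - (ℓ * i - 1)).choose (k - j)
        = ∑ j ∈ Finset.Icc (a / ℓ + 1) k, a.choose j * (n - a).choose (k - j) := by
          rw [hdiv]
      _ ≤ _ := Finset.le_sup (f := fun x => ∑ j ∈ Finset.Icc (x / ℓ + 1) k,
          x.choose j * (n - x).choose (k - j)) hmem
end

section
/- Let s ≥ 2, t ≥ 1, k, n be integers and let a = t + sp + r with 0 ≤ r, integers p ≥ 0. Then max over all valid a of ∑_{i ≥ t+(s−1)p+r} C(a,i)·C(n−a,k−i) is attained at some a with s | (a − t), i.e., at some a of the form t + sp (r = 0). -/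
open Finset

private lemma shiftIcc (f : ℕ → ℕ) (a b : ℕ) :
    ∑ i ∈ Icc (a+1) (b+1), f i = ∑ i ∈ Icc a b, f (i+1) := by
  rw [← Finset.map_add_right_Icc a b 1, Finset.sum_map]
  rfl

private lemma key (b c m' k' : ℕ) (hm : m' ≤ k') :
    ∑ i ∈ Icc (m'+1) (k'+1), (b+1).choose i * c.choose (k'+1-i) ≤
    ∑ i ∈ Icc m' (k'+1), b.choose i * (c+1).choose (k'+1-i) := by
  have hT : ∑ j ∈ Icc m' k', b.choose (j+1) * c.choose (k'-j)
      = ∑ i ∈ Icc (m'+1) (k'+1), b.choose i * c.choose (k'+1-i) := by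
    rw [shiftIcc (fun i => b.choose i * c.choose (k'+1-i))]
    exact Finset.sum_congr rfl (fun j hj => by
      simp only [mem_Icc] at hj; congr 2; omega)
  have hLHS : ∑ i ∈ Icc (m'+1) (k'+1), (b+1).choose i * c.choose (k'+1-i)
      = (∑ j ∈ Icc m' k', b.choose j * c.choose (k'-j))
        + ∑ i ∈ Icc (m'+1) (k'+1), b.choose i * c.choose (k'+1-i) := by
    rw [shiftIcc (fun i => (b+1).choose i * c.choose (k'+1-i)), ← hT,
      ← Finset.sum_add_distrib]
    refine Finset.sum_congr rfl (fun j hj => ?_)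
    simp only [mem_Icc] at hj
    have h1 : k' + 1 - (j+1) = k' - j := by omega
    simp only [h1, Nat.choose_succ_succ, add_mul]
  have hRHS : ∑ i ∈ Icc m' (k'+1), b.choose i * (c+1).choose (k'+1-i)
      = (∑ j ∈ Icc m' k', b.choose j * c.choose (k'-j))
        + (b.choose m' * c.choose (k'+1-m')
          + ∑ i ∈ Icc (m'+1) (k'+1), b.choose i * c.choose (k'+1-i)) := by
    rw [Finset.sum_Icc_succ_top (by omega : m' ≤ k'+1)]
    have e1 : ∀ j ∈ Icc m' k', b.choose j * (c+1).choose (k'+1-j)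
        = b.choose j * c.choose (k'-j) + b.choose j * c.choose (k'+1-j) := by
      intro j hj
      simp only [mem_Icc] at hj
      have h1 : k' + 1 - j = (k' - j) + 1 := by omega
      rw [h1, Nat.choose_succ_succ, mul_add]
    rw [Finset.sum_congr rfl e1, Finset.sum_add_distrib]
    have e3 : (∑ i ∈ Icc m' k', b.choose i * c.choose (k'+1-i))
        + b.choose (k'+1) * (c+1).choose (k'+1-(k'+1))
        = ∑ i ∈ Icc m' (k'+1), b.choose i * c.choose (k'+1-i) := by
      rw [Finset.sum_Icc_succ_top (by omega : m' ≤ k'+1)]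
      simp
    have e4 : ∑ i ∈ Icc m' (k'+1), b.choose i * c.choose (k'+1-i)
        = b.choose m' * c.choose (k'+1-m')
          + ∑ i ∈ Icc (m'+1) (k'+1), b.choose i * c.choose (k'+1-i) := by
      have hins : Icc m' (k'+1) = insert m' (Icc (m'+1) (k'+1)) := by
        ext x; simp [mem_Icc, mem_insert]; omega
      rw [hins, Finset.sum_insert (by simp)]
    omega
  rw [hLHS, hRHS]
  omega

private lemma modfacts (s x : ℕ) (hs : 2 ≤ s) (hx : x % s ≠ 0) :
    (x-1)/s = x/s ∧ (x-1)%s = x%s - 1 := by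
  have hdm := Nat.div_add_mod x s
  have hlt : x % s < s := Nat.mod_lt _ (by omega)
  have h1 : x - 1 = s * (x/s) + (x%s - 1) := by omega
  refine ⟨?_, ?_⟩
  · rw [h1, Nat.mul_add_div (by omega : 0 < s), Nat.div_eq_of_lt (show x % s - 1 < s by omega), add_zero]
  · rw [h1, Nat.mul_add_mod, Nat.mod_eq_of_lt (by omega)]

private lemma step (s n k t : ℕ) (hs : 2 ≤ s) (ht : 1 ≤ t) (a : ℕ) (hta : t ≤ a)
    (han : a ≤ n) (hr : (a - t) % s ≠ 0) :
    (∑ i ∈ Icc (t + (s-1) * ((a-t)/s) + (a-t)%s) k, a.choose i * (n-a).choose (k-i)) ≤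
    ∑ i ∈ Icc (t + (s-1) * ((a-1-t)/s) + (a-1-t)%s) k,
      (a-1).choose i * (n-(a-1)).choose (k-i) := by
  obtain ⟨hq, hm⟩ := modfacts s (a-t) hs hr
  have hlt : (a-t) % s < s := Nat.mod_lt _ (by omega)
  have hmle : (a-t) % s ≤ a - t := Nat.mod_le _ _
  have hat : t < a := by omega
  set p := (a-t)/s with hp
  set r := (a-t)%s with hrr
  have hL : t + (s-1) * ((a-1-t)/s) + (a-1-t)%s = (t + (s-1)*p + r) - 1 := by
    rw [show a-1-t = a-t-1 from by omega, hq, hm]; omega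
  set L := t + (s-1)*p + r with hLdef
  have hL1 : 1 ≤ L := by omega
  rw [hL]
  by_cases hk : k < L
  · rw [Finset.Icc_eq_empty (by omega), Finset.sum_empty]
    exact Nat.zero_le _
  · push_neg at hk
    have h1 : (∑ i ∈ Icc L k, a.choose i * (n-a).choose (k-i))
        = ∑ i ∈ Icc ((L-1)+1) ((k-1)+1), ((a-1)+1).choose i * (n-a).choose ((k-1)+1-i) := by
      rw [show (L-1)+1 = L by omega, show (k-1)+1 = k by omega, show (a-1)+1 = a by omega]
    have h2 : (∑ i ∈ Icc (L-1) ((k-1)+1), (a-1).choose i * ((n-a)+1).choose ((k-1)+1-i))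
        = ∑ i ∈ Icc (L-1) k, (a-1).choose i * (n-(a-1)).choose (k-i) := by
      rw [show (k-1)+1 = k by omega, show (n-a)+1 = n-(a-1) by omega]
    rw [h1, ← h2]
    exact key (a-1) (n-a) (L-1) (k-1) (by omega)

private lemma chain (s n k t : ℕ) (hs : 2 ≤ s) (ht : 1 ≤ t) :
    ∀ r a, t ≤ a → a ≤ n → (a - t) % s = r →
    (∑ i ∈ Icc (t + (s-1) * ((a-t)/s) + (a-t)%s) k, a.choose i * (n-a).choose (k-i)) ≤
    ∑ i ∈ Icc (t + (s-1) * ((a-r-t)/s) + (a-r-t)%s) k,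
      (a-r).choose i * (n-(a-r)).choose (k-i) := by
  intro r
  induction r with
  | zero => intro a _ _ _; simp
  | succ r ih =>
    intro a hta han hmod
    have hmle : (a-t) % s ≤ a - t := Nat.mod_le _ _
    have hta1 : t ≤ a - 1 := by omega
    obtain ⟨hq, hm⟩ := modfacts s (a-t) hs (by omega)
    have h1 := step s n k t hs ht a hta han (by omega)
    have h2 := ih (a-1) hta1 (by omega) (by rw [show a-1-t = a-t-1 by omega, hm]; omega)
    rw [show a-1-r = a-(r+1) by omega] at h2
    calc _ ≤ _ := h1
      _ ≤ _ := by
        rw [show a-1-t = a-t-1 by omega] at h2 ⊢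
        exact h2

/-- Writing `a = t + sp + r` with `p = (a−t)/s`, `r = (a−t) % s`, the maximum of
`∑_{i ≥ t+(s−1)p+r} C(a,i)C(n−a,k−i)` over `t ≤ a ≤ n` is attained at some `a`
with `s ∣ (a − t)`. -/
theorem stmt_11 (s n k t : ℕ) (hs : 2 ≤ s) (ht : 1 ≤ t) (htn : t ≤ n) :
    ∃ a ∈ Finset.Icc t n, s ∣ (a - t) ∧
      ∀ a' ∈ Finset.Icc t n,
        (∑ i ∈ Finset.Icc (t + (s - 1) * ((a' - t) / s) + (a' - t) % s) k,
            a'.choose i * (n - a').choose (k - i)) ≤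
          ∑ i ∈ Finset.Icc (t + (s - 1) * ((a - t) / s) + (a - t) % s) k,
            a.choose i * (n - a).choose (k - i) := by
  obtain ⟨b, hb, hmax⟩ := Finset.exists_max_image (Finset.Icc t n)
    (fun a => ∑ i ∈ Icc (t + (s-1) * ((a-t)/s) + (a-t)%s) k, a.choose i * (n-a).choose (k-i))
    ⟨t, Finset.mem_Icc.mpr ⟨le_rfl, htn⟩⟩
  simp only [Finset.mem_Icc] at hb
  have hmle : (b-t) % s ≤ b - t := Nat.mod_le _ _
  refine ⟨b - (b-t)%s, Finset.mem_Icc.mpr ⟨by omega, by omega⟩, ?_, ?_⟩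
  · refine ⟨(b-t)/s, ?_⟩
    have := Nat.div_add_mod (b-t) s
    omega
  · intro a' ha'
    have h1 := hmax a' ha'
    have h2 := chain s n k t hs ht ((b-t)%s) b hb.1 hb.2 rfl
    exact h1.trans h2
end
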